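/- Consider ℤ^{d+1} = ℤ^d × ℤ split into halves ℤ^{d+1}_± = ℤ^d × (±ℕ₊) separated by the boundary Γ = ℤ^d × {0}, with inward normal direction N = e_{d+1}. Let ℙ be the adapted projection on ℓ²(ℤ^{d+1}; ℂ^{2(d+1)}) with symbol P(x) = 1 for x ∈ ℤ^{d+1}_+, P(x) = 0 for x ∈ ℤ^{d+1}_−, and P(x) = 1 − |N⟩⟨N| for x ∈ Γ. Let ℂ be any coin whose symbol, for every x ∈ Γ, maps the span of the tangential directions {|±j⟩ : 1 ≤ j ≤ d} to itself and reflects the normal: C(x)|+N⟩ = |−N⟩ and C(x)|−N⟩ = |+N⟩. Then for the quantum walk U = T∘ℂ one has U*ℙU = ℙ, i.e. the flux Φ := U*ℙU − ℙ vanishes identically. -/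

import Mathlib

open ContinuousLinearMap

noncomputable section

/-- Sites of the lattice `ℤ^{d+1}`. -/
abbrev Site (d : ℕ) := Fin (d + 1) → ℤ

/-- The coin space `ℂ^{2(d+1)}`. -/
abbrev CoinSp (d : ℕ) := EuclideanSpace ℂ (Fin (2 * (d + 1)))

/-- The Hilbert space `ℓ²(ℤ^{d+1}; ℂ^{2(d+1)})`. -/
abbrev QWH (d : ℕ) := lp (fun _ : Site d => CoinSp d) 2

/-- The lattice vector of the `i`-th quantum direction. -/
def dirVec (d : ℕ) (i : Fin (2 * (d + 1))) : Site d :=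
  fun j => if (j : ℕ) = (i : ℕ) / 2 then (if (i : ℕ) % 2 = 0 then 1 else -1) else 0

/-- The coin-space basis vector `|τ⟩` of the `i`-th direction. -/
def coinVec (d : ℕ) (i : Fin (2 * (d + 1))) : CoinSp d := EuclideanSpace.single i 1

/-- The rank-one projection `P_τ = |τ⟩⟨τ|`. -/
def Pdir (d : ℕ) (i : Fin (2 * (d + 1))) : CoinSp d →L[ℂ] CoinSp d :=
  (innerSL ℂ (coinVec d i)).smulRight (coinVec d i)

/-- The index of the inward normal direction `|+N⟩ = |+e_{d+1}⟩`. -/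
def idxPN (d : ℕ) : Fin (2 * (d + 1)) := ⟨2 * d, by omega⟩

/-- The index of the outward normal direction `|−N⟩ = |−e_{d+1}⟩`. -/
def idxMN (d : ℕ) : Fin (2 * (d + 1)) := ⟨2 * d + 1, by omega⟩

/-- The last (normal) coordinate of a site of `ℤ^{d+1} = ℤ^d × ℤ`. -/
def lastCoord (d : ℕ) (x : Site d) : ℤ := x (Fin.last d)

/-- The symbol of the bulk projection: `1` on `ℤ^{d+1}_+`, `0` on `ℤ^{d+1}_−` and
`1 − |N⟩⟨N|` on the boundary `Γ = ℤ^d × {0}`. -/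
def bulkSym (d : ℕ) (x : Site d) : CoinSp d →L[ℂ] CoinSp d :=
  if 0 < lastCoord d x then 1 else if lastCoord d x < 0 then 0 else 1 - Pdir d (idxPN d)

/- ### Auxiliary lemmas -/

lemma coinVec_apply (d : ℕ) (i j : Fin (2 * (d + 1))) :
    coinVec d i j = if j = i then 1 else 0 := by
  simp [coinVec, EuclideanSpace.single_apply]

lemma Pdir_apply (d : ℕ) (i : Fin (2 * (d + 1))) (v : CoinSp d) :
    Pdir d i v = v i • coinVec d i := by
  simp [Pdir, coinVec, EuclideanSpace.inner_single_left]

lemma idxPN_ne_idxMN (d : ℕ) : idxPN d ≠ idxMN d := by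
  simp [idxPN, idxMN, Fin.ext_iff]

lemma dirVec_last (d : ℕ) (i : Fin (2 * (d + 1))) :
    dirVec d i (Fin.last d) =
      if (i : ℕ) = 2 * d then 1 else if (i : ℕ) = 2 * d + 1 then -1 else 0 := by
  have hi := i.isLt
  simp only [dirVec, Fin.val_last]
  split_ifs <;> omega

lemma bulkSym_of_pos {d : ℕ} {x : Site d} (h : 0 < lastCoord d x) :
    bulkSym d x = 1 := by simp [bulkSym, h]

lemma bulkSym_of_neg {d : ℕ} {x : Site d} (h : lastCoord d x < 0) :
    bulkSym d x = 0 := by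
  simp [bulkSym, h, not_lt_of_gt h]

lemma bulkSym_of_zero {d : ℕ} {x : Site d} (h : lastCoord d x = 0) :
    bulkSym d x = 1 - Pdir d (idxPN d) := by simp [bulkSym, h]

lemma bdry_apply (d : ℕ) (v : CoinSp d) (i : Fin (2 * (d + 1))) :
    ((1 - Pdir d (idxPN d)) v) i
      = v i - v (idxPN d) * (if i = idxPN d then 1 else 0) := by
  simp only [ContinuousLinearMap.sub_apply, ContinuousLinearMap.one_apply, Pdir_apply]
  simp [coinVec_apply]

set_option maxHeartbeats 1000000 in
/-- Let `ℙ` be the adapted projection which is full in the upper half space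
`ℤ^{d+1}_+`, zero in the lower half space, and `1 − |N⟩⟨N|` on the boundary `Γ`, and let the
coin leave the tangential subspace invariant and reflect the normal (`C(x)|±N⟩ = |∓N⟩`) on `Γ`.
Then the quantum walk `U = T∘ℂ` satisfies `U*ℙU = ℙ`, i.e. the flux vanishes. -/
theorem stmt_14 (d : ℕ)
    (C : Site d → (CoinSp d →L[ℂ] CoinSp d))
    (hCunit : ∀ x, adjoint (C x) * C x = 1 ∧ C x * adjoint (C x) = 1)
    -- on Γ the coin maps the tangential subspace to itself …
    (hCtang : ∀ x : Site d, lastCoord d x = 0 → ∀ v : CoinSp d,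
      v (idxPN d) = 0 → v (idxMN d) = 0 →
        (C x v) (idxPN d) = 0 ∧ (C x v) (idxMN d) = 0)
    -- … and reflects the normal direction
    (hCrefl : ∀ x : Site d, lastCoord d x = 0 →
      C x (coinVec d (idxPN d)) = coinVec d (idxMN d) ∧
      C x (coinVec d (idxMN d)) = coinVec d (idxPN d))
    (U : QWH d →L[ℂ] QWH d)
    (hUunit : adjoint U * U = 1 ∧ U * adjoint U = 1)
    (hU : ∀ (ψ : QWH d) (x : Site d) (i : Fin (2 * (d + 1))),
      (U ψ) x i = (C (x - dirVec d i) (ψ (x - dirVec d i))) i)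
    (Pop : QWH d →L[ℂ] QWH d)
    (hPop : ∀ (ψ : QWH d) (x : Site d), (Pop ψ) x = bulkSym d x (ψ x)) :
    adjoint U * Pop * U = Pop := by
  have hPNMN := idxPN_ne_idxMN d
  have hcomm : Pop * U = U * Pop := by
    refine ContinuousLinearMap.ext fun ψ => ?_
    refine lp.ext (funext fun x => PiLp.ext fun i => ?_)
    have hmul1 : (Pop * U) ψ x i = (bulkSym d x ((U ψ) x)) i := by
      rw [ContinuousLinearMap.mul_apply, hPop]
    have hmul2 : (U * Pop) ψ x i
        = (C (x - dirVec d i) (bulkSym d (x - dirVec d i) (ψ (x - dirVec d i)))) i := by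
      rw [ContinuousLinearMap.mul_apply, hU, hPop]
    rw [hmul1, hmul2]
    set y : Site d := x - dirVec d i with hy
    set v : CoinSp d := ψ y with hv
    have hylast : lastCoord d y = lastCoord d x -
        (if (i : ℕ) = 2 * d then 1 else if (i : ℕ) = 2 * d + 1 then -1 else 0) := by
      simp only [lastCoord, hy, Pi.sub_apply, dirVec_last]
    have hival : (i : ℕ) < 2 * d ∨ (i : ℕ) = 2 * d ∨ (i : ℕ) = 2 * d + 1 := by
      have := i.isLt; omega
    have hiPN : i = idxPN d ↔ (i : ℕ) = 2 * d := by simp [idxPN, Fin.ext_iff]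
    have hiMN : i = idxMN d ↔ (i : ℕ) = 2 * d + 1 := by simp [idxMN, Fin.ext_iff]
    rcases lt_trichotomy (lastCoord d x) 0 with hL | hL | hL
    · -- lower half space: both sides vanish
      rw [bulkSym_of_neg hL]
      simp only [ContinuousLinearMap.zero_apply]
      rcases hival with h | h | h
      · have : lastCoord d y < 0 := by
          rw [hylast, if_neg (by omega), if_neg (by omega)]; omega
        rw [bulkSym_of_neg this]
        simp [map_zero, PiLp.zero_apply, ContinuousLinearMap.zero_apply]
      · -- i = +N : the source is even deeper in the lower half space
        have : lastCoord d y < 0 := by rw [hylast, if_pos h]; omega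
        rw [bulkSym_of_neg this]
        simp [map_zero, PiLp.zero_apply, ContinuousLinearMap.zero_apply]
      · -- i = −N : the source may be on the boundary
        have hIMN : i = idxMN d := hiMN.mpr h
        have hyL : lastCoord d y = lastCoord d x + 1 := by
          rw [hylast, if_neg (by omega), if_pos h]; omega
        rcases lt_or_eq_of_le (by omega : lastCoord d x ≤ -1) with h' | h'
        · have : lastCoord d y < 0 := by omega
          rw [bulkSym_of_neg this]
          simp [map_zero, PiLp.zero_apply, ContinuousLinearMap.zero_apply]
        · -- boundary source: the (−N)-component of the image vanishes
          have hy0 : lastCoord d y = 0 := by omega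
          rw [bulkSym_of_zero hy0]
          set w : CoinSp d := (1 - Pdir d (idxPN d)) v with hw
          have hwPN : w (idxPN d) = 0 := by
            rw [hw, bdry_apply]; simp
          -- decompose w into a tangential part and a multiple of |−N⟩
          set m : ℂ := w (idxMN d) with hm
          have hdec : w = (w - m • coinVec d (idxMN d)) + m • coinVec d (idxMN d) := by
            abel
          have hwPN' : (w - m • coinVec d (idxMN d)) (idxPN d) = 0 := by
            have : (w - m • coinVec d (idxMN d)) (idxPN d)
                = w (idxPN d) - m * coinVec d (idxMN d) (idxPN d) := by
              simp [PiLp.sub_apply, PiLp.smul_apply, smul_eq_mul]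
            rw [this, hwPN, coinVec_apply]
            simp [hPNMN]
          have hwMN' : (w - m • coinVec d (idxMN d)) (idxMN d) = 0 := by
            have : (w - m • coinVec d (idxMN d)) (idxMN d)
                = w (idxMN d) - m * coinVec d (idxMN d) (idxMN d) := by
              simp [PiLp.sub_apply, PiLp.smul_apply, smul_eq_mul]
            rw [this, coinVec_apply]
            simp [hm]
          have htang := (hCtang y hy0 _ hwPN' hwMN').2
          have hrefl := (hCrefl y hy0).2
          calc (0 : CoinSp d) i = 0 := rfl
            _ = (C y w) (idxMN d) := by
                rw [hdec, map_add, map_smul]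
                have h1 : (C y (w - m • coinVec d (idxMN d)) +
                    m • C y (coinVec d (idxMN d))) (idxMN d)
                    = (C y (w - m • coinVec d (idxMN d))) (idxMN d)
                      + m * (C y (coinVec d (idxMN d))) (idxMN d) := by
                  simp [PiLp.add_apply, PiLp.smul_apply, smul_eq_mul]
                rw [h1, htang, hrefl, coinVec_apply]
                simp [(Ne.symm hPNMN)]
            _ = (C y w) i := by rw [hIMN]
    · -- boundary site
      rw [bulkSym_of_zero hL, bdry_apply]
      rcases hival with h | h | h
      · -- tangential direction
        have hne1 : ¬ i = idxPN d := by rw [hiPN]; omega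
        have hne2 : ¬ i = idxMN d := by rw [hiMN]; omega
        have hy0 : lastCoord d y = 0 := by
          rw [hylast, if_neg (by omega), if_neg (by omega)]; omega
        rw [bulkSym_of_zero hy0]
        have hexp : (1 - Pdir d (idxPN d)) v = v - v (idxPN d) • coinVec d (idxPN d) := by
          simp [ContinuousLinearMap.sub_apply, Pdir_apply]
        rw [hexp, map_sub, map_smul]
        have h2 : (C y v - v (idxPN d) • C y (coinVec d (idxPN d))) i
            = (C y v) i - v (idxPN d) * (C y (coinVec d (idxPN d))) i := by
          simp [PiLp.sub_apply, PiLp.smul_apply, smul_eq_mul]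
        rw [h2, (hCrefl y hy0).1, coinVec_apply]
        have : (U ψ) x i = (C y v) i := hU ψ x i
        simp [this, hne1, hne2]
      · -- i = +N : left side vanishes, source is in the lower half space
        have hIPN : i = idxPN d := hiPN.mpr h
        have hyneg : lastCoord d y < 0 := by rw [hylast, if_pos h]; omega
        rw [bulkSym_of_neg hyneg, if_pos hIPN, mul_one, hIPN, sub_self]
        simp [map_zero, PiLp.zero_apply, ContinuousLinearMap.zero_apply]
      · -- i = −N : source in the upper half space
        have hne1 : ¬ i = idxPN d := by rw [hiPN]; omega
        have hypos : 0 < lastCoord d y := by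
          rw [hylast, if_neg (by omega), if_pos h]; omega
        rw [bulkSym_of_pos hypos]
        have : (U ψ) x i = (C y v) i := hU ψ x i
        rw [ContinuousLinearMap.one_apply]
        simp [this, hne1]
    · -- upper half space
      rw [bulkSym_of_pos hL]
      simp only [ContinuousLinearMap.one_apply]
      have hUval : (U ψ) x i = (C y v) i := hU ψ x i
      rcases hival with h | h | h
      · have : 0 < lastCoord d y := by
          rw [hylast, if_neg (by omega), if_neg (by omega)]; omega
        rw [bulkSym_of_pos this, ContinuousLinearMap.one_apply]
        exact hUval
      · -- i = +N : source may be on the boundary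
        have hyL : lastCoord d y = lastCoord d x - 1 := by rw [hylast, if_pos h]
        rcases lt_or_eq_of_le (by omega : 1 ≤ lastCoord d x) with h' | h'
        · have : 0 < lastCoord d y := by omega
          rw [bulkSym_of_pos this, ContinuousLinearMap.one_apply]
          exact hUval
        · have hy0 : lastCoord d y = 0 := by omega
          rw [bulkSym_of_zero hy0]
          have hexp : (1 - Pdir d (idxPN d)) v = v - v (idxPN d) • coinVec d (idxPN d) := by
            simp [ContinuousLinearMap.sub_apply, Pdir_apply]
          rw [hexp, map_sub, map_smul]
          have h2 : (C y v - v (idxPN d) • C y (coinVec d (idxPN d))) i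
              = (C y v) i - v (idxPN d) * (C y (coinVec d (idxPN d))) i := by
            simp [PiLp.sub_apply, PiLp.smul_apply, smul_eq_mul]
          rw [h2, (hCrefl y hy0).1, coinVec_apply]
          have hne2 : ¬ i = idxMN d := by rw [hiMN]; omega
          simp [hUval, hne2]
      · have : 0 < lastCoord d y := by
          rw [hylast, if_neg (by omega), if_pos h]; omega
        rw [bulkSym_of_pos this, ContinuousLinearMap.one_apply]
        exact hUval
  calc adjoint U * Pop * U = adjoint U * (Pop * U) := by rw [mul_assoc]
    _ = adjoint U * (U * Pop) := by rw [hcomm]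
    _ = (adjoint U * U) * Pop := by rw [mul_assoc]
    _ = Pop := by rw [hUunit.1, one_mul]
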